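/- arXiv:1311.5113 — 3 statements merged into one kernel-verified Lean document; each statement's English description precedes it below -/
import Mathlib

section
/- For any absolutely continuous function x: [α,β] → ℝⁿ with x(α) = 0 and x' ∈ L², it holds that ∫_α^β |x(t)|² dt ≤ (1/2)(β-α)² ∫_α^β |x'(t)|² dt. -/
open MeasureTheory Set

/-- For an absolutely continuous `x : [α,β] → ℝⁿ` with `x α = 0` and
square-integrable derivative `x'`, one has
`∫_α^β |x t|² dt ≤ (1/2)(β-α)² ∫_α^β |x' t|² dt`. -/
theorem stmt1 (n : ℕ) (α β : ℝ) (hαβ : α < β)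
    (x x' : ℝ → EuclideanSpace ℝ (Fin n))
    (hrep : ∀ t ∈ Set.Icc α β, x t = ∫ s in α..t, x' s)
    (hx0 : x α = 0)
    (hL2 : MeasureTheory.MemLp x' 2 (MeasureTheory.volume.restrict (Set.Icc α β))) :
    ∫ t in α..β, ‖x t‖ ^ 2 ≤ (1 / 2) * (β - α) ^ 2 * ∫ t in α..β, ‖x' t‖ ^ 2 := by
  have hab : α ≤ β := hαβ.le
  have hfin : IsFiniteMeasure (volume.restrict (Set.Icc α β)) := by
    constructor
    rw [Measure.restrict_apply_univ]
    exact measure_Icc_lt_top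
  -- x' is integrable on Icc
  have hx'int : IntegrableOn x' (Icc α β) := by
    exact hL2.integrable one_le_two
  -- ‖x'‖² is integrable on Icc
  have hsqint : IntegrableOn (fun t => ‖x' t‖ ^ 2) (Icc α β) := by
    have h := hL2.integrable_norm_rpow (by norm_num) (by norm_num)
    rw [show (2 : ENNReal).toReal = (2 : ℝ) by norm_num] at h
    have heq : (fun t => ‖x' t‖ ^ 2) = fun t => ‖x' t‖ ^ (2:ℝ) := by
      funext t; rw [← Real.rpow_natCast ‖x' t‖ 2]; norm_num
    rw [IntegrableOn, heq]; exact h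
  set I := ∫ t in Set.Ioc α β, ‖x' t‖ ^ 2 with hIdef
  have hI_nonneg : 0 ≤ I :=
    setIntegral_nonneg measurableSet_Ioc fun t _ => sq_nonneg _
  -- pointwise key bound
  have key : ∀ t ∈ Icc α β, ‖x t‖ ^ 2 ≤ (t - α) * I := by
    intro t ht
    have hαt : α ≤ t := ht.1
    have hsub : Set.Ioc α t ⊆ Set.Icc α β := fun s hs => ⟨hs.1.le, hs.2.trans ht.2⟩
    have hμle : volume.restrict (Set.Ioc α t) ≤ volume.restrict (Set.Icc α β) :=
      Measure.restrict_mono hsub le_rfl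
    have hL2t : MemLp x' 2 (volume.restrict (Set.Ioc α t)) := hL2.mono_measure hμle
    have h1 : MemLp (fun _ : ℝ => (1 : ℝ)) 2 (volume.restrict (Set.Ioc α t)) :=
      memLp_const _
    have hconj : Real.HolderConjugate 2 2 := ⟨by norm_num, by norm_num, by norm_num⟩
    have hofR : ENNReal.ofReal (2 : ℝ) = 2 := by norm_num
    have holder := integral_mul_norm_le_Lp_mul_Lq (μ := volume.restrict (Set.Ioc α t))
      (f := fun s => ‖x' s‖) (g := fun _ : ℝ => (1:ℝ))
      hconj (by rw [hofR]; exact hL2t.norm) (by rw [hofR]; exact h1)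
    -- simplify the constant part
    have hμt : (volume (Set.Ioc α t)).toReal = t - α := by
      rw [Real.volume_Ioc, ENNReal.toReal_ofReal (by linarith)]
    simp only [norm_one, norm_norm, mul_one, Real.one_rpow, integral_const, smul_eq_mul,
      Measure.restrict_apply_univ, measureReal_restrict_apply_univ, measureReal_def, hμt] at holder
    -- interval integral over Ioc α t of ‖x'‖² is ≤ I
    have hsq_int_t : IntegrableOn (fun s => ‖x' s‖ ^ 2) (Set.Ioc α t) :=
      hsqint.mono_set hsub
    have hmono : (∫ s in Set.Ioc α t, ‖x' s‖ ^ 2) ≤ I := by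
      apply setIntegral_mono_set (hsqint.mono_set Set.Ioc_subset_Icc_self)
      · exact Filter.Eventually.of_forall fun s => sq_nonneg _
      · exact HasSubset.Subset.eventuallyLE (Set.Ioc_subset_Ioc_right ht.2)
    have hIt_nonneg : (0:ℝ) ≤ ∫ s in Set.Ioc α t, ‖x' s‖ ^ 2 :=
      setIntegral_nonneg measurableSet_Ioc fun s _ => sq_nonneg _
    -- rewrite rpow 2 as pow 2 inside holder
    have hrpow : (∫ s in Set.Ioc α t, ‖x' s‖ ^ (2:ℝ)) = ∫ s in Set.Ioc α t, ‖x' s‖ ^ 2 := by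
      refine setIntegral_congr_fun measurableSet_Ioc fun s _ => ?_
      rw [← Real.rpow_natCast ‖x' s‖ 2]; norm_num
    rw [hrpow] at holder
    -- norm of x t bounded by integral of norms
    have hxt : ‖x t‖ ≤ ∫ s in Set.Ioc α t, ‖x' s‖ := by
      rw [hrep t ht]
      calc ‖∫ s in α..t, x' s‖ ≤ ∫ s in α..t, ‖x' s‖ :=
            intervalIntegral.norm_integral_le_integral_norm hαt
        _ = ∫ s in Set.Ioc α t, ‖x' s‖ := intervalIntegral.integral_of_le hαt
    have hxt2 : ‖x t‖ ≤ (∫ s in Set.Ioc α t, ‖x' s‖ ^ 2) ^ ((1:ℝ)/2) * (t - α) ^ ((1:ℝ)/2) :=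
      hxt.trans holder
    have hrhs_nonneg : (0:ℝ) ≤ (∫ s in Set.Ioc α t, ‖x' s‖ ^ 2) ^ ((1:ℝ)/2) * (t - α) ^ ((1:ℝ)/2) :=
      mul_nonneg (Real.rpow_nonneg hIt_nonneg _) (Real.rpow_nonneg (by linarith) _)
    have hsq := mul_self_le_mul_self (norm_nonneg (x t)) hxt2
    calc ‖x t‖ ^ 2 = ‖x t‖ * ‖x t‖ := pow_two _
      _ ≤ ((∫ s in Set.Ioc α t, ‖x' s‖ ^ 2) ^ ((1:ℝ)/2) * (t - α) ^ ((1:ℝ)/2)) *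
          ((∫ s in Set.Ioc α t, ‖x' s‖ ^ 2) ^ ((1:ℝ)/2) * (t - α) ^ ((1:ℝ)/2)) := hsq
      _ = (∫ s in Set.Ioc α t, ‖x' s‖ ^ 2) * (t - α) := by
          rw [mul_mul_mul_comm, ← Real.rpow_add' hIt_nonneg (by norm_num),
            ← Real.rpow_add' (by linarith : (0:ℝ) ≤ t - α) (by norm_num)]
          norm_num
      _ ≤ I * (t - α) := by
          apply mul_le_mul_of_nonneg_right hmono (by linarith)
      _ = (t - α) * I := mul_comm _ _
  -- x is continuous on Icc, hence ‖x‖² integrable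
  have hxcont : ContinuousOn x (Icc α β) := by
    have hc : ContinuousOn (fun u => ∫ s in Set.Ioc α u, x' s) (Icc α β) :=
      intervalIntegral.continuousOn_primitive hx'int
    refine ContinuousOn.congr hc fun u hu => ?_
    rw [hrep u hu, intervalIntegral.integral_of_le hu.1]
  have hxint : IntegrableOn (fun t => ‖x t‖ ^ 2) (Icc α β) :=
    ((hxcont.norm.pow 2).integrableOn_compact isCompact_Icc)
  -- integrate the pointwise bound
  have hlin_int : IntervalIntegrable (fun t => (t - α) * I) volume α β :=
    (continuous_id.sub continuous_const).mul continuous_const |>.intervalIntegrable α β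
  have hxII : IntervalIntegrable (fun t => ‖x t‖ ^ 2) volume α β := by
    rw [intervalIntegrable_iff_integrableOn_Icc_of_le hab]
    exact hxint
  have hstep : ∫ t in α..β, ‖x t‖ ^ 2 ≤ ∫ t in α..β, (t - α) * I :=
    intervalIntegral.integral_mono_on hab hxII hlin_int key
  have hlin_val : (∫ t in α..β, (t - α) * I) = (1/2) * (β - α) ^ 2 * I := by
    rw [intervalIntegral.integral_mul_const]
    have : (∫ t in α..β, (t - α)) = (β - α) ^ 2 / 2 := by
      have := intervalIntegral.integral_comp_sub_right (a := α) (b := β) (fun u => u) α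
      rw [this, integral_id]
      ring
    rw [this]; ring
  have hIval : (∫ t in α..β, ‖x' t‖ ^ 2) = I := intervalIntegral.integral_of_le hab
  rw [hIval]
  calc ∫ t in α..β, ‖x t‖ ^ 2 ≤ ∫ t in α..β, (t - α) * I := hstep
    _ = (1/2) * (β - α) ^ 2 * I := hlin_val
end

section
/- Let K: P_Δ → ℝ^{n×n} be measurable and bounded by l, with t-derivative K_t also measurable and bounded by l, such that T maps AC₀² to AC₀². Then for every k ≥ 1 and g ∈ AC₀² with M = sup |g|, one has ‖T^k g‖_{AC₀²} ≤ C·M·l · (l(β-α))^{k-1}/(k-1)!, where C² = (β-α)(1+β-α)² and ‖h‖²_{AC₀²} = ∫_α^β |h'(t)|² dt. -/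
open MeasureTheory Set Filter Topology

/-- for a Volterra kernel `K` bounded by `l` with `t`-derivative `Kt` also
bounded by `l`, such that the Volterra operator `T` maps `AC₀²` into `AC₀²`, the iterates of
`T` applied to `g ∈ AC₀²` with `M = sup |g|` satisfy
`‖T^k g‖_{AC₀²} ≤ C M l (l(β-α))^{k-1}/(k-1)!`, `C² = (β-α)(1+β-α)²`, where
`‖h‖_{AC₀²} = (∫_α^β |h'|²)^{1/2}`. -/
theorem stmt5 (n : ℕ) (α β : ℝ) (hαβ : α < β) (l : ℝ) (hl : 0 < l)
    (K Kt : ℝ → ℝ → (EuclideanSpace ℝ (Fin n) →L[ℝ] EuclideanSpace ℝ (Fin n)))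
    (hKmeas : StronglyMeasurable fun p : ℝ × ℝ => K p.1 p.2)
    (hKtmeas : StronglyMeasurable fun p : ℝ × ℝ => Kt p.1 p.2)
    (hKbd : ∀ t τ, α ≤ τ → τ ≤ t → t ≤ β → ‖K t τ‖ ≤ l ∧ ‖Kt t τ‖ ≤ l)
    (hKt : ∀ τ, ∀ t ∈ Set.Icc α β, HasDerivAt (fun s => K s τ) (Kt t τ) t)
    (T : (ℝ → EuclideanSpace ℝ (Fin n)) → (ℝ → EuclideanSpace ℝ (Fin n)))
    (hT : ∀ h t, T h t = ∫ τ in α..t, K t τ (h τ))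
    -- T maps AC₀² into AC₀²
    (hTmaps : ∀ h h' : ℝ → EuclideanSpace ℝ (Fin n),
      (∀ t ∈ Set.Icc α β, h t = ∫ s in α..t, h' s) →
      MeasureTheory.MemLp h' 2 (MeasureTheory.volume.restrict (Set.Icc α β)) →
      (∀ t ∈ Set.Icc α β, HasDerivAt (T h) (deriv (T h) t) t) ∧
        MeasureTheory.MemLp (deriv (T h)) 2 (MeasureTheory.volume.restrict (Set.Icc α β)))
    -- g ∈ AC₀² with M = sup |g|
    (g g' : ℝ → EuclideanSpace ℝ (Fin n))
    (hg : ∀ t ∈ Set.Icc α β, g t = ∫ s in α..t, g' s)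
    (hgL2 : MeasureTheory.MemLp g' 2 (MeasureTheory.volume.restrict (Set.Icc α β)))
    (M : ℝ) (hM : ∀ t ∈ Set.Icc α β, ‖g t‖ ≤ M) :
    ∀ k : ℕ, 1 ≤ k →
      Real.sqrt (∫ t in α..β, ‖deriv (T^[k] g) t‖ ^ 2) ≤
        Real.sqrt ((β - α) * (1 + (β - α)) ^ 2) * M * l *
          (l * (β - α)) ^ (k - 1) / (Nat.factorial (k - 1)) := by
  intro k hk
  obtain ⟨m, rfl⟩ : ∃ m, k = m + 1 := ⟨k - 1, (Nat.succ_pred_eq_of_pos hk).symm⟩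
  simp only [Nat.add_sub_cancel]
  have hβα : (0:ℝ) ≤ β - α := by linarith
  have hM0 : 0 ≤ M := (norm_nonneg _).trans (hM α ⟨le_rfl, hαβ.le⟩)
  haveI : IsFiniteMeasure (volume.restrict (Icc α β)) :=
    ⟨by rw [Measure.restrict_apply_univ]; exact measure_Icc_lt_top⟩
  have smK : ∀ b : ℝ, StronglyMeasurable fun τ => K b τ := fun b =>
    hKmeas.comp_measurable (measurable_const.prodMk measurable_id)
  -- continuity of AC₀² functions
  have contOf : ∀ h h' : ℝ → EuclideanSpace ℝ (Fin n),
      (∀ t ∈ Icc α β, h t = ∫ s in α..t, h' s) →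
      MemLp h' 2 (volume.restrict (Icc α β)) → ContinuousOn h (Icc α β) := by
    intro h h' hrep hL2
    have hint : IntegrableOn h' (Icc α β) := hL2.integrable one_le_two
    have hc := intervalIntegral.continuousOn_primitive_interval
      (a := α) (b := β) (μ := volume) (f := h')
      (by rwa [uIcc_of_le hαβ.le])
    rw [uIcc_of_le hαβ.le] at hc
    exact hc.congr hrep
  -- integrability of the integrand of T
  have integK : ∀ (b : ℝ) (h : ℝ → EuclideanSpace ℝ (Fin n)) (C : ℝ), b ∈ Icc α β →
      ContinuousOn h (Icc α β) → (∀ τ ∈ Icc α β, ‖h τ‖ ≤ C) →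
      ∀ a₁ b₁, α ≤ a₁ → a₁ ≤ b₁ → b₁ ≤ b →
      IntervalIntegrable (fun τ => K b τ (h τ)) volume a₁ b₁ := by
    intro b h C hb hc hC a₁ b₁ ha₁ h₁ h₂
    rw [intervalIntegrable_iff_integrableOn_Ioc_of_le h₁]
    have hsub : Ioc a₁ b₁ ⊆ Icc α β := fun τ hτ =>
      ⟨ha₁.trans hτ.1.le, hτ.2.trans (h₂.trans hb.2)⟩
    have hmh : AEStronglyMeasurable h (volume.restrict (Ioc a₁ b₁)) :=
      (hc.aestronglyMeasurable measurableSet_Icc).mono_measure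
        (Measure.restrict_mono hsub le_rfl)
    have hmK : AEStronglyMeasurable (fun τ => K b τ) (volume.restrict (Ioc a₁ b₁)) :=
      (smK b).aestronglyMeasurable
    have hmsm : AEStronglyMeasurable (fun τ => K b τ (h τ)) (volume.restrict (Ioc a₁ b₁)) :=
      isBoundedBilinearMap_apply.continuous.comp_aestronglyMeasurable (hmK.prodMk hmh)
    refine Integrable.mono' (g := fun _ => l * C)
      (integrableOn_const measure_Ioc_lt_top.ne) hmsm ?_
    filter_upwards [ae_restrict_mem measurableSet_Ioc] with τ hτ
    calc ‖K b τ (h τ)‖ ≤ ‖K b τ‖ * ‖h τ‖ := (K b τ).le_opNorm _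
      _ ≤ l * C := mul_le_mul ((hKbd b τ (ha₁.trans hτ.1.le) (hτ.2.trans h₂) hb.2).1)
          (hC τ (hsub hτ)) (norm_nonneg _) hl.le
  -- main induction: representation + pointwise bound
  have main : ∀ j : ℕ,
      (∃ hd : ℝ → EuclideanSpace ℝ (Fin n),
        (∀ t ∈ Icc α β, T^[j] g t = ∫ s in α..t, hd s) ∧
        MemLp hd 2 (volume.restrict (Icc α β))) ∧
      ∀ t ∈ Icc α β, ‖T^[j] g t‖ ≤ M * l ^ j * (t - α) ^ j / (Nat.factorial j) := by
    intro j
    induction j with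
    | zero =>
      refine ⟨⟨g', by simpa using hg, hgL2⟩, fun t ht => ?_⟩
      simpa using hM t ht
    | succ j ih =>
      obtain ⟨⟨hd, hrep, hL2⟩, hbd⟩ := ih
      have hcont : ContinuousOn (T^[j] g) (Icc α β) := contOf _ _ hrep hL2
      have hTm := hTmaps (T^[j] g) hd hrep hL2
      have hit : T^[j+1] g = T (T^[j] g) := Function.iterate_succ_apply' T j g
      constructor
      · refine ⟨deriv (T^[j+1] g), fun t ht => ?_, ?_⟩
        · have hint : IntervalIntegrable (deriv (T (T^[j] g))) volume α t := by
            rw [intervalIntegrable_iff_integrableOn_Ioc_of_le ht.1]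
            have hIcc : IntegrableOn (deriv (T (T^[j] g))) (Icc α β) volume :=
              hTm.2.integrable one_le_two
            exact hIcc.mono_set (fun x hx => ⟨hx.1.le, hx.2.trans ht.2⟩)
          have heq := intervalIntegral.integral_eq_sub_of_hasDerivAt
            (f := T (T^[j] g)) (f' := deriv (T (T^[j] g))) (a := α) (b := t)
            (fun x hx => by
              rw [uIcc_of_le ht.1] at hx
              exact hTm.1 x ⟨hx.1, hx.2.trans ht.2⟩) hint
          have h0 : T (T^[j] g) α = 0 := by rw [hT]; simp
          rw [hit, heq, h0, sub_zero]
        · rw [hit]; exact hTm.2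
      · intro t ht
        have htα : (0:ℝ) ≤ t - α := by linarith [ht.1]
        have hfac : (0:ℝ) < (Nat.factorial j : ℝ) := by
          exact_mod_cast Nat.factorial_pos j
        have key : ‖∫ τ in α..t, K t τ (T^[j] g τ)‖ ≤
            |∫ τ in α..t, l * (M * l ^ j * (τ - α) ^ j / (Nat.factorial j))| := by
          refine intervalIntegral.norm_integral_le_abs_of_norm_le ?_ ?_
          · rw [uIoc_of_le ht.1]
            filter_upwards [ae_restrict_mem measurableSet_Ioc] with τ hτ
            have hτI : τ ∈ Icc α β := ⟨hτ.1.le, hτ.2.trans ht.2⟩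
            calc ‖K t τ (T^[j] g τ)‖ ≤ ‖K t τ‖ * ‖T^[j] g τ‖ := (K t τ).le_opNorm _
              _ ≤ l * (M * l ^ j * (τ - α) ^ j / (Nat.factorial j)) :=
                mul_le_mul ((hKbd t τ hτ.1.le hτ.2 ht.2).1) (hbd τ hτI)
                  (norm_nonneg _) hl.le
          · exact (Continuous.intervalIntegrable (by fun_prop) _ _)
        have hval : (∫ τ in α..t, l * (M * l ^ j * (τ - α) ^ j / (Nat.factorial j)))
            = M * l ^ (j+1) * (t - α) ^ (j+1) / (Nat.factorial (j+1)) := by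
          have hrw : (fun τ : ℝ => l * (M * l ^ j * (τ - α) ^ j / (Nat.factorial j)))
              = fun τ : ℝ => (l * M * l ^ j / (Nat.factorial j)) * ((τ - α) ^ j) := by
            funext τ; ring
          rw [hrw, intervalIntegral.integral_const_mul]
          have hpow : (∫ τ in α..t, (τ - α) ^ j) = (t - α) ^ (j+1) / (j+1) := by
            have := intervalIntegral.integral_comp_sub_right
              (a := α) (b := t) (fun x : ℝ => x ^ j) α
            rw [this, integral_pow]
            simp
          rw [hpow, Nat.factorial_succ]
          have h1 : ((j:ℝ) + 1) ≠ 0 := by positivity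
          push_cast
          field_simp
          ring
        have hpos : (0:ℝ) ≤ M * l ^ (j+1) * (t - α) ^ (j+1) / (Nat.factorial (j+1)) := by
          apply div_nonneg _ (Nat.cast_nonneg _)
          exact mul_nonneg (mul_nonneg hM0 (pow_nonneg hl.le _)) (pow_nonneg htα _)
        rw [hit, hT]
        refine key.trans ?_
        rw [hval, abs_of_nonneg hpos]
  -- derivative bound for step m → m+1
  obtain ⟨⟨hd, hrep, hL2⟩, hbd⟩ := main m
  have hcont : ContinuousOn (T^[m] g) (Icc α β) := contOf _ _ hrep hL2
  have hTm := hTmaps (T^[m] g) hd hrep hL2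
  set Mb : ℝ := M * l ^ m * (β - α) ^ m / (Nat.factorial m) with hMb
  have hMb0 : 0 ≤ Mb := by
    apply div_nonneg _ (Nat.cast_nonneg _)
    exact mul_nonneg (mul_nonneg hM0 (pow_nonneg hl.le _)) (pow_nonneg hβα _)
  have hbd' : ∀ τ ∈ Icc α β, ‖T^[m] g τ‖ ≤ Mb := by
    intro τ hτ
    refine (hbd τ hτ).trans ?_
    rw [hMb]
    gcongr <;>
      first
        | exact mul_nonneg hM0 (pow_nonneg hl.le _)
        | linarith [hτ.1, hτ.2]
  set C : ℝ := l * Mb * (1 + (β - α)) with hCdef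
  have hC0 : 0 ≤ C := by
    apply mul_nonneg (mul_nonneg hl.le hMb0); linarith
  -- Lipschitz estimate for T (T^[m] g) on [α, β]
  have lip : ∀ a b : ℝ, α ≤ a → a ≤ b → b ≤ β →
      ‖T (T^[m] g) b - T (T^[m] g) a‖ ≤ C * (b - a) := by
    intro a b ha hab hb
    have hbI : b ∈ Icc α β := ⟨ha.trans hab, hb⟩
    have haI : a ∈ Icc α β := ⟨ha, hab.trans hb⟩
    have i1 : IntervalIntegrable (fun τ => K b τ (T^[m] g τ)) volume α a :=
      integK b _ Mb hbI hcont hbd' α a le_rfl ha hab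
    have i2 : IntervalIntegrable (fun τ => K b τ (T^[m] g τ)) volume a b :=
      integK b _ Mb hbI hcont hbd' a b ha hab le_rfl
    have i3 : IntervalIntegrable (fun τ => K a τ (T^[m] g τ)) volume α a :=
      integK a _ Mb haI hcont hbd' α a le_rfl ha le_rfl
    have hsplit : T (T^[m] g) b - T (T^[m] g) a
        = (∫ τ in α..a, (K b τ (T^[m] g τ) - K a τ (T^[m] g τ)))
          + ∫ τ in a..b, K b τ (T^[m] g τ) := by
      rw [hT, hT, ← intervalIntegral.integral_add_adjacent_intervals i1 i2,
        intervalIntegral.integral_sub i1 i3]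
      abel
    have hb1 : ‖∫ τ in α..a, (K b τ (T^[m] g τ) - K a τ (T^[m] g τ))‖
        ≤ (l * (b - a) * Mb) * (β - α) := by
      have hba0 : (0:ℝ) ≤ b - a := by linarith
      have h1 := intervalIntegral.norm_integral_le_of_norm_le_const
        (a := α) (b := a) (C := l * (b - a) * Mb)
        (f := fun τ => K b τ (T^[m] g τ) - K a τ (T^[m] g τ)) ?_
      · refine h1.trans ?_
        rw [abs_of_nonneg (by linarith : (0:ℝ) ≤ a - α)]
        have : 0 ≤ l * (b - a) * Mb := by positivity
        gcongr
        linarith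
      · intro τ hτ
        rw [uIoc_of_le ha] at hτ
        have hτI : τ ∈ Icc α β := ⟨hτ.1.le, hτ.2.trans (hab.trans hb)⟩
        have hKdiff : ‖K b τ - K a τ‖ ≤ l * (b - a) := by
          have hmvt := norm_image_sub_le_of_norm_deriv_le_segment'
            (f := fun s => K s τ) (f' := fun s => Kt s τ) (a := a) (b := b) (C := l)
            (fun x hx => (hKt τ x ⟨ha.trans hx.1, hx.2.trans hb⟩).hasDerivWithinAt)
            (fun x hx => (hKbd x τ hτ.1.le (hτ.2.trans hx.1) (hx.2.le.trans hb)).2)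
            b (right_mem_Icc.2 hab)
          exact hmvt
        calc ‖K b τ (T^[m] g τ) - K a τ (T^[m] g τ)‖
            = ‖(K b τ - K a τ) (T^[m] g τ)‖ := by rw [ContinuousLinearMap.sub_apply]
          _ ≤ ‖K b τ - K a τ‖ * ‖T^[m] g τ‖ := (K b τ - K a τ).le_opNorm _
          _ ≤ (l * (b - a)) * Mb := mul_le_mul hKdiff (hbd' τ hτI) (norm_nonneg _)
              (mul_nonneg hl.le hba0)
    have hb2 : ‖∫ τ in a..b, K b τ (T^[m] g τ)‖ ≤ (l * Mb) * (b - a) := by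
      have h2 := intervalIntegral.norm_integral_le_of_norm_le_const
        (a := a) (b := b) (C := l * Mb) (f := fun τ => K b τ (T^[m] g τ)) ?_
      · refine h2.trans ?_
        rw [abs_of_nonneg (by linarith : (0:ℝ) ≤ b - a)]
      · intro τ hτ
        rw [uIoc_of_le hab] at hτ
        have hτI : τ ∈ Icc α β := ⟨ha.trans hτ.1.le, hτ.2.trans hb⟩
        calc ‖K b τ (T^[m] g τ)‖ ≤ ‖K b τ‖ * ‖T^[m] g τ‖ := (K b τ).le_opNorm _
          _ ≤ l * Mb := mul_le_mul ((hKbd b τ hτI.1 hτ.2 hb).1) (hbd' τ hτI)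
              (norm_nonneg _) hl.le
    calc ‖T (T^[m] g) b - T (T^[m] g) a‖
        ≤ ‖∫ τ in α..a, (K b τ (T^[m] g τ) - K a τ (T^[m] g τ))‖
          + ‖∫ τ in a..b, K b τ (T^[m] g τ)‖ := by rw [hsplit]; exact norm_add_le _ _
      _ ≤ (l * (b - a) * Mb) * (β - α) + (l * Mb) * (b - a) := add_le_add hb1 hb2
      _ = C * (b - a) := by rw [hCdef]; ring
  -- bound on the derivative
  have hDbd : ∀ t ∈ Icc α β, ‖deriv (T (T^[m] g)) t‖ ≤ C := by
    intro t ht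
    have hdw : HasDerivWithinAt (T (T^[m] g)) (deriv (T (T^[m] g)) t) (Icc α β) t :=
      (hTm.1 t ht).hasDerivWithinAt
    rw [hasDerivWithinAt_iff_tendsto_slope] at hdw
    haveI hne : (𝓝[Icc α β \ {t}] t).NeBot := by
      rw [← mem_closure_iff_nhdsWithin_neBot]
      rcases lt_or_eq_of_le ht.2 with h | h
      · have hsub : Ioo t β ⊆ Icc α β \ {t} := fun y hy =>
          ⟨⟨ht.1.trans hy.1.le, hy.2.le⟩, ne_of_gt hy.1⟩
        exact closure_mono hsub (by rw [closure_Ioo h.ne]; exact ⟨le_rfl, h.le⟩)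
      · have hsub : Ioo α β ⊆ Icc α β \ {t} := fun y hy =>
          ⟨⟨hy.1.le, hy.2.le⟩, ne_of_lt (h ▸ hy.2)⟩
        refine closure_mono hsub ?_
        rw [closure_Ioo hαβ.ne]
        exact ⟨h ▸ hαβ.le, h ▸ le_rfl⟩
    refine le_of_tendsto hdw.norm ?_
    filter_upwards [self_mem_nhdsWithin] with y hy
    have hyI : y ∈ Icc α β := hy.1
    have hyt : y ≠ t := hy.2
    have hfd : ‖T (T^[m] g) y - T (T^[m] g) t‖ ≤ C * |y - t| := by
      rcases le_total t y with h1 | h1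
      · rw [abs_of_nonneg (by linarith)]
        exact lip t y ht.1 h1 hyI.2
      · rw [abs_of_nonpos (by linarith), neg_sub, norm_sub_rev]
        exact lip y t hyI.1 h1 ht.2
    have hd0 : (0:ℝ) < |y - t| := abs_pos.2 (sub_ne_zero.2 hyt)
    rw [slope_def_module, norm_smul, norm_inv, Real.norm_eq_abs]
    calc |y - t|⁻¹ * ‖T (T^[m] g) y - T (T^[m] g) t‖
        ≤ |y - t|⁻¹ * (C * |y - t|) :=
          mul_le_mul_of_nonneg_left hfd (inv_nonneg.2 hd0.le)
      _ = C := by field_simp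
  -- integrate the squared bound
  have hIbd : (∫ t in α..β, ‖deriv (T^[m+1] g) t‖ ^ 2) ≤ C ^ 2 * (β - α) := by
    rw [Function.iterate_succ_apply']
    have h1 := intervalIntegral.norm_integral_le_of_norm_le_const (a := α) (b := β)
      (C := C ^ 2) (f := fun t => ‖deriv (T (T^[m] g)) t‖ ^ 2) ?_
    · refine le_trans (le_abs_self _) ?_
      rw [← Real.norm_eq_abs]
      refine h1.trans ?_
      rw [abs_of_nonneg hβα]
    · intro x hx
      rw [uIoc_of_le hαβ.le] at hx
      rw [Real.norm_eq_abs, abs_of_nonneg (by positivity)]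
      exact pow_le_pow_left₀ (norm_nonneg _) (hDbd x ⟨hx.1.le, hx.2⟩) 2
  calc Real.sqrt (∫ t in α..β, ‖deriv (T^[m+1] g) t‖ ^ 2)
      ≤ Real.sqrt (C ^ 2 * (β - α)) := Real.sqrt_le_sqrt hIbd
    _ = Real.sqrt ((β - α) * (1 + (β - α)) ^ 2) * M * l *
        (l * (β - α)) ^ m / (Nat.factorial m) := by
        rw [show C ^ 2 * (β - α) = ((β - α) * (1 + (β - α)) ^ 2) * (l * Mb) ^ 2 by
          rw [hCdef]; ring]
        rw [Real.sqrt_mul (mul_nonneg hβα (sq_nonneg _)),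
          Real.sqrt_sq (mul_nonneg hl.le hMb0), hMb, mul_pow]
        ring
end

section
/- Let X be a real Banach space, H a real Hilbert space, and V: X → H a C¹ operator such that: (a1) for every x ∈ X and g ∈ H, the equation V'(x)h = g has a unique solution h ∈ X; (a2) for every y ∈ H, the functional F_y(x) = (1/2)‖V(x) - y‖²_H satisfies the Palais-Smale condition. Then V is a diffeomorphism: V is a bijection of X onto H and both V and V⁻¹ are Fréchet differentiable. -/
open Filter

/-- The Palais–Smale condition: every sequence on which `φ` is bounded and whose sequence of
derivatives tends to `0` has a convergent subsequence. -/
def PalaisSmale {X : Type*} [NormedAddCommGroup X] [NormedSpace ℝ X] (φ : X → ℝ) : Prop :=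
  ∀ z : ℕ → X, (∃ M : ℝ, ∀ k, |φ (z k)| ≤ M) →
    Tendsto (fun k => ‖fderiv ℝ φ (z k)‖) atTop (nhds 0) →
    ∃ (z₀ : X) (σ : ℕ → ℕ), StrictMono σ ∧ Tendsto (fun k => z (σ k)) atTop (nhds z₀)

open Metric Set Topology

private lemma opNorm_le_of_unit_lb {X : Type*} [NormedAddCommGroup X] [NormedSpace ℝ X]
    {L : X →L[ℝ] ℝ} {c : ℝ} (hc : 0 ≤ c) (h : ∀ v : X, ‖v‖ ≤ 1 → -c ≤ L v) : ‖L‖ ≤ c := by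
  refine L.opNorm_le_bound hc (fun x => ?_)
  rcases eq_or_ne x 0 with rfl | hx
  · simp
  · have hn : 0 < ‖x‖ := norm_pos_iff.2 hx
    have key : ∀ z : X, ‖z‖ = ‖x‖ → -(c * ‖x‖) ≤ L z := by
      intro z hz
      have h1 : ‖(‖x‖⁻¹ • z)‖ ≤ 1 := by
        rw [norm_smul, hz, norm_inv, norm_norm]
        simp [inv_mul_cancel₀ hn.ne']
      have h2 := h _ h1
      rw [map_smul, smul_eq_mul] at h2
      have := mul_le_mul_of_nonneg_left h2 hn.le
      calc -(c * ‖x‖) = ‖x‖ * -c := by ring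
        _ ≤ ‖x‖ * (‖x‖⁻¹ * L z) := this
        _ = L z := by field_simp
    have k1 := key x rfl
    have k2 := key (-x) (by simp)
    rw [map_neg] at k2
    rw [Real.norm_eq_abs]
    rw [abs_le]
    constructor <;> linarith

private lemma norm_fderiv_le_of_ekeland {X : Type*} [NormedAddCommGroup X] [NormedSpace ℝ X]
    {f : X → ℝ} {x : X} {L : X →L[ℝ] ℝ} (hd : HasFDerivAt f L x)
    {ε : ℝ} (hε : 0 ≤ ε) (hmin : ∀ z, f x - ε * dist x z ≤ f z) : ‖L‖ ≤ ε := by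
  refine opNorm_le_of_unit_lb hε (fun v hv => ?_)
  have hline : HasDerivAt (fun t : ℝ => f (x + t • v)) (L v) 0 := by
    have h1 : HasDerivAt (fun t : ℝ => x + t • v) v 0 := by
      simpa using ((hasDerivAt_id (0 : ℝ)).smul_const v).const_add x
    have h2 : HasFDerivAt f L (x + (0 : ℝ) • v) := by simpa using hd
    exact h2.comp_hasDerivAt 0 h1
  have htend : Tendsto (slope (fun t : ℝ => f (x + t • v)) 0) (𝓝[>] 0) (𝓝 (L v)) :=
    (hasDerivAt_iff_tendsto_slope.1 hline).mono_left
      (nhdsWithin_mono 0 (fun t ht => ne_of_gt ht))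
  have hslope : ∀ t ∈ Ioi (0 : ℝ), -ε ≤ slope (fun t : ℝ => f (x + t • v)) 0 t := by
    intro t ht
    have ht' : (0 : ℝ) < t := ht
    have h1 : f x - ε * (t * ‖v‖) ≤ f (x + t • v) := by
      have := hmin (x + t • v)
      have hd : dist x (x + t • v) = t * ‖v‖ := by
        rw [dist_eq_norm]
        simp [norm_smul, abs_of_pos ht']
      rwa [hd] at this
    have h2 : -ε * t ≤ f (x + t • v) - f x := by
      have : ε * (t * ‖v‖) ≤ ε * t := by
        have := mul_le_mul_of_nonneg_left hv (mul_nonneg hε ht'.le)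
        calc ε * (t * ‖v‖) = ε * t * ‖v‖ := by ring
          _ ≤ ε * t * 1 := mul_le_mul_of_nonneg_left hv (mul_nonneg hε ht'.le)
          _ = ε * t := by ring
      linarith
    rw [slope_def_field, sub_zero, le_div_iff₀ ht']
    simpa using h2
  exact ge_of_tendsto htend (eventually_nhdsWithin_of_forall hslope)


private lemma ekeland {E : Type*} [MetricSpace E] [CompleteSpace E]
    {f : E → ℝ} (hf : LowerSemicontinuous f) {m : ℝ} (hm : ∀ x, m ≤ f x)
    {ε : ℝ} (hε : 0 < ε) (x₀ : E) :
    ∃ x, f x ≤ f x₀ ∧ ∀ z, f x - ε * dist x z ≤ f z := by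
  set S : E → Set E := fun x => {z | f z + ε * dist x z ≤ f x} with hS
  have hmemS : ∀ x, x ∈ S x := by intro x; simp [hS]
  have hSne : ∀ x, (S x).Nonempty := fun x => ⟨x, hmemS x⟩
  have hbdd : ∀ x, BddBelow (f '' S x) := by
    intro x
    exact ⟨m, by rintro r ⟨z, _, rfl⟩; exact hm z⟩
  have key : ∀ (x : E) (n : ℕ), ∃ z, (f z + ε * dist x z ≤ f x) ∧
      f z ≤ sInf (f '' S x) + (1 / 2) ^ n := by
    intro x n
    obtain ⟨r, hr, hrlt⟩ := Real.lt_sInf_add_pos ((hSne x).image f)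
      (show (0:ℝ) < (1/2) ^ n by positivity)
    obtain ⟨z, hz, rfl⟩ := hr
    exact ⟨z, hz, hrlt.le⟩
  let u : ℕ → E := fun n => Nat.rec x₀ (fun n x => (key x n).choose) n
  have hu0 : u 0 = x₀ := rfl
  have P1 : ∀ n, f (u (n + 1)) + ε * dist (u n) (u (n + 1)) ≤ f (u n) :=
    fun n => (key (u n) n).choose_spec.1
  have P2 : ∀ n, f (u (n + 1)) ≤ sInf (f '' S (u n)) + (1 / 2) ^ n :=
    fun n => (key (u n) n).choose_spec.2
  have hmono : ∀ n, f (u (n + 1)) ≤ f (u n) := by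
    intro n
    have := P1 n
    nlinarith [dist_nonneg (x := u n) (y := u (n+1)), hε.le]
  have hanti : Antitone (fun n => f (u n)) := antitone_nat_of_succ_le hmono
  have Q : ∀ n k, f (u (n + k)) + ε * dist (u n) (u (n + k)) ≤ f (u n) := by
    intro n k
    induction k with
    | zero => simp
    | succ k ih =>
      have h1 := P1 (n + k)
      have htri : dist (u n) (u (n + (k+1))) ≤ dist (u n) (u (n + k)) + dist (u (n + k)) (u (n + k + 1)) := by
        rw [show n + (k+1) = n + k + 1 by ring]
        exact dist_triangle _ _ _
      have h2 := mul_le_mul_of_nonneg_left htri hε.le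
      rw [show n + (k+1) = n + k + 1 by ring] at h2 ⊢
      linarith
  have Q' : ∀ n j, n ≤ j → f (u j) + ε * dist (u n) (u j) ≤ f (u n) := by
    intro n j hnj
    obtain ⟨k, rfl⟩ := Nat.exists_eq_add_of_le hnj
    exact Q n k
  -- the sequence f (u n) converges
  have hbb : BddBelow (Set.range fun n => f (u n)) := ⟨m, by rintro r ⟨n, rfl⟩; exact hm _⟩
  set L : ℝ := ⨅ n, f (u n) with hL
  have hfL : Filter.Tendsto (fun n => f (u n)) atTop (nhds L) :=
    tendsto_atTop_ciInf hanti hbb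
  have hLle : ∀ n, L ≤ f (u n) := fun n => ciInf_le hbb n
  -- Cauchy
  have hcauchy : CauchySeq u := by
    refine cauchySeq_of_le_tendsto_0 (fun n => (f (u n) - L) / ε) ?_ ?_
    · intro n j N hn hj
      have main : ∀ p q, N ≤ p → p ≤ q → dist (u p) (u q) ≤ (f (u N) - L) / ε := by
        intro p q hp hpq
        have h1 := Q' p q hpq
        have h2 : f (u p) ≤ f (u N) := hanti hp
        have h3 := hLle q
        rw [le_div_iff₀ hε]
        nlinarith
      show dist (u n) (u j) ≤ (f (u N) - L) / ε
      rcases le_total n j with h | h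
      · exact main n j hn h
      · rw [dist_comm]; exact main j n hj h
    · have : Filter.Tendsto (fun n => (f (u n) - L) / ε) atTop (nhds ((L - L) / ε)) :=
        ((hfL.sub tendsto_const_nhds).div_const ε)
      simpa using this
  obtain ⟨x, hx⟩ := cauchySeq_tendsto_of_complete hcauchy
  -- x is the Ekeland point
  have A : ∀ n, f x + ε * dist (u n) x ≤ f (u n) := by
    intro n
    have hforall : ∀ c, c < f x → c + ε * dist (u n) x ≤ f (u n) := by
      intro c hc
      have hev : ∀ᶠ j in atTop, c < f (u j) := hx.eventually (hf x c hc)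
      have hev2 : ∀ᶠ j in atTop, c + ε * dist (u n) (u j) ≤ f (u n) := by
        filter_upwards [hev, eventually_ge_atTop n] with j h1 h2
        have := Q' n j h2
        linarith
      have htd : Filter.Tendsto (fun j => c + ε * dist (u n) (u j)) atTop
          (nhds (c + ε * dist (u n) x)) :=
        tendsto_const_nhds.add ((Filter.Tendsto.dist tendsto_const_nhds hx).const_mul ε)
      exact le_of_tendsto htd hev2
    by_contra hcon
    push_neg at hcon
    have h2 := hforall ((f (u n) - ε * dist (u n) x + f x) / 2) (by linarith)
    linarith
  refine ⟨x, by
    have h := A 0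
    rw [hu0] at h
    have := mul_nonneg hε.le (dist_nonneg (x := x₀) (y := x))
    linarith, ?_⟩
  intro z
  by_contra hcon
  push_neg at hcon
  have hzS : ∀ n, z ∈ S (u n) := by
    intro n
    have h1 : dist (u n) z ≤ dist (u n) x + dist x z := dist_triangle _ _ _
    have h2 := A n
    simp only [hS, Set.mem_setOf_eq]
    have h3 := mul_le_mul_of_nonneg_left h1 hε.le
    linarith
  have hfinf : ∀ n, sInf (f '' S (u n)) ≤ f z :=
    fun n => csInf_le (hbdd _) ⟨z, hzS n, rfl⟩
  have hxz : ∀ n, f x ≤ f z + (1/2) ^ n := by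
    intro n
    have h1 := P2 n
    have h2 := A (n + 1)
    have h3 := hfinf n
    have h4 := mul_nonneg hε.le (dist_nonneg (x := u (n+1)) (y := x))
    linarith
  have hfxz : f x ≤ f z := by
    refine le_of_forall_pos_le_add (fun δ hδ => ?_)
    obtain ⟨n, hn⟩ := exists_pow_lt_of_lt_one hδ (by norm_num : (1:ℝ)/2 < 1)
    exact (hxz n).trans (by linarith)
  have := mul_nonneg hε.le (dist_nonneg (x := x) (y := z))
  linarith

set_option maxHeartbeats 4000000 in
/-- let `X` be a real Banach space, `H` a real Hilbert space, `V : X → H` of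
class `C¹` such that (a1) for every `x`, `V'(x)h = g` has a unique solution `h` for every
`g`, and (a2) for every `y ∈ H` the functional `F_y(x) = (1/2)‖V(x) - y‖²` satisfies the
Palais–Smale condition.  Then `V` is a diffeomorphism: a differentiable bijection of `X`
onto `H` with differentiable inverse. -/
theorem stmt11 {X H : Type*}
    [NormedAddCommGroup X] [NormedSpace ℝ X] [CompleteSpace X]
    [NormedAddCommGroup H] [InnerProductSpace ℝ H] [CompleteSpace H]
    (V : X → H) (hV : ContDiff ℝ 1 V)
    (ha1 : ∀ (x : X) (g : H), ∃! h : X, fderiv ℝ V x h = g)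
    (ha2 : ∀ y : H, PalaisSmale fun x : X => (1 / 2) * ‖V x - y‖ ^ 2) :
    Function.Bijective V ∧ Differentiable ℝ V ∧
      ∃ W : H → X, Function.LeftInverse W V ∧ Function.RightInverse W V ∧
        Differentiable ℝ W := by
  classical
  have hVd : Differentiable ℝ V := hV.differentiable one_ne_zero
  have hbij : ∀ x : X, Function.Bijective (fderiv ℝ V x) := by
    intro x
    refine ⟨fun h₁ h₂ hh => ?_, fun g => ⟨(ha1 x g).exists.choose, (ha1 x g).exists.choose_spec⟩⟩
    exact ((ha1 x (fderiv ℝ V x h₂)).unique hh rfl)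
  let e : X → (X ≃L[ℝ] H) := fun x => ContinuousLinearEquiv.ofBijective (fderiv ℝ V x)
      (LinearMap.ker_eq_bot.2 (hbij x).1) (LinearMap.range_eq_top.2 (hbij x).2)
  have he : ∀ x, (e x : X →L[ℝ] H) = fderiv ℝ V x := fun x =>
    ContinuousLinearEquiv.coe_ofBijective _ _ _
  have hstrict : ∀ x : X, HasStrictFDerivAt V (e x : X →L[ℝ] H) x := by
    intro x
    rw [he x]
    exact hV.contDiffAt.hasStrictFDerivAt one_ne_zero
  -- the functionals and their derivatives
  set F : H → X → ℝ := fun y x => (1 / 2 : ℝ) * ‖V x - y‖ ^ 2 with hFdef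
  have hFC : ∀ y, ContDiff ℝ 1 (F y) := by
    intro y
    exact contDiff_const.mul ((hV.sub contDiff_const).norm_sq ℝ)
  have hF0 : ∀ y x, 0 ≤ F y x := by intro y x; positivity
  have hFD : ∀ (y : H) (x : X),
      HasFDerivAt (F y) ((innerSL ℝ (V x - y)).comp (fderiv ℝ V x)) x := by
    intro y x
    have hG : HasFDerivAt (fun x => V x - y) (fderiv ℝ V x) x := (hVd x).hasFDerivAt.sub_const y
    have h1 := (hG.inner ℝ hG).const_mul (1 / 2 : ℝ)
    have heq : (fun x => (1 / 2 : ℝ) * (inner ℝ (V x - y) (V x - y) : ℝ)) = F y := by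
      funext z
      rw [real_inner_self_eq_norm_sq]
    rw [heq] at h1
    convert h1 using 1
    case e'_8 => rfl
    case e'_9 => rfl
    ext h
    simp only [ContinuousLinearMap.coe_comp', Function.comp_apply, innerSL_apply_apply,
      ContinuousLinearMap.coe_smul', Pi.smul_apply, fderivInnerCLM_apply,
      ContinuousLinearMap.prod_apply, smul_eq_mul]
    rw [real_inner_comm (fderiv ℝ V x h) (V x - y)]
    ring
  have hFderiv : ∀ (y : H) (x : X),
      fderiv ℝ (F y) x = (innerSL ℝ (V x - y)).comp (fderiv ℝ V x) := fun y x =>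
    (hFD y x).fderiv
  have hFcont : ∀ y, Continuous (F y) := fun y => (hFC y).continuous
  have hΦcont : ∀ y, Continuous (fun x => fderiv ℝ (F y) x) := fun y =>
    (hFC y).continuous_fderiv one_ne_zero
  have hcrit : ∀ (y : H) (x : X), fderiv ℝ (F y) x = 0 → V x = y := by
    intro y x hx
    obtain ⟨h, hh⟩ := (hbij x).2 (V x - y)
    have : (fderiv ℝ (F y) x) h = 0 := by rw [hx]; rfl
    rw [hFderiv y x] at this
    simp only [ContinuousLinearMap.coe_comp', Function.comp_apply, innerSL_apply_apply, hh] at this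
    rw [← sub_eq_zero]
    exact inner_self_eq_zero.1 this
  -- almost critical points converging: common pattern
  have limit_crit : ∀ (y : H) (z : ℕ → X) (M : ℝ), (∀ k, |F y (z k)| ≤ M) →
      Tendsto (fun k => ‖fderiv ℝ (F y) (z k)‖) atTop (nhds 0) →
      ∃ x₀ : X, V x₀ = y ∧ ∃ σ : ℕ → ℕ, StrictMono σ ∧
        Tendsto (fun k => z (σ k)) atTop (nhds x₀) := by
    intro y z M hM htend
    obtain ⟨x₀, σ, hσ, hlim⟩ := ha2 y z ⟨M, hM⟩ htend
    refine ⟨x₀, ?_, σ, hσ, hlim⟩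
    apply hcrit y x₀
    have h1 : Tendsto (fun k => ‖fderiv ℝ (F y) (z (σ k))‖) atTop (nhds 0) :=
      htend.comp hσ.tendsto_atTop
    have h2 : Tendsto (fun k => ‖fderiv ℝ (F y) (z (σ k))‖) atTop
        (nhds ‖fderiv ℝ (F y) x₀‖) :=
      (continuous_norm.comp (hΦcont y)).continuousAt.tendsto.comp hlim
    have := tendsto_nhds_unique h2 h1
    rwa [norm_eq_zero] at this
  -- surjectivity
  have hsurj : Function.Surjective V := by
    intro y
    have hEk : ∀ n : ℕ, ∃ x : X, F y x ≤ F y 0 ∧ ‖fderiv ℝ (F y) x‖ ≤ 1 / (n + 1) := by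
      intro n
      obtain ⟨x, hx1, hx2⟩ := ekeland (f := F y) ((hFcont y).lowerSemicontinuous)
        (hF0 y) (by positivity : (0:ℝ) < 1 / (n + 1)) (0 : X)
      exact ⟨x, hx1, norm_fderiv_le_of_ekeland ((hFC y).differentiable one_ne_zero x).hasFDerivAt
        (by positivity) hx2⟩
    choose z hz1 hz2 using hEk
    obtain ⟨x₀, hx₀, -⟩ := limit_crit y z (F y 0)
      (fun k => by rw [abs_of_nonneg (hF0 y (z k))]; exact hz1 k)
      (squeeze_zero (fun k => norm_nonneg _) hz2 tendsto_one_div_add_atTop_nhds_zero_nat)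
    exact ⟨x₀, hx₀⟩
  -- injectivity
  have hinj : Function.Injective V := by
    intro a b hab
    by_contra hne
    set y := V a with hy
    have hFa : F y a = 0 := by simp [hFdef, hy]
    have hFb : F y b = 0 := by simp [hFdef, ← hab]
    have hdab : 0 < dist a b := dist_pos.2 hne
    -- Step 1: a quantitative sphere bound around `a` from the inverse function theorem
    obtain ⟨r, hr0, hrab, ρ, hρ0, hsphere⟩ :
        ∃ r > 0, r < dist a b ∧ ∃ ρ > 0, ∀ x : X, dist x a = r → ρ ≤ dist (V x) y := by
      set P := (hstrict a).toOpenPartialHomeomorph V with hP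
      have haP : a ∈ P.source := (hstrict a).mem_toOpenPartialHomeomorph_source
      obtain ⟨r₀, hr₀, hball⟩ := Metric.isOpen_iff.1 P.open_source a haP
      refine ⟨min (r₀ / 2) (dist a b / 2), lt_min (by linarith) (by linarith),
        (min_le_right _ _).trans_lt (by linarith), ?_⟩
      set r := min (r₀ / 2) (dist a b / 2) with hrdef
      have hr0 : 0 < r := lt_min (by linarith) (by linarith)
      have hcont := (hstrict a).localInverse_continuousAt (f := V)
      rw [Metric.continuousAt_iff] at hcont
      obtain ⟨ρ, hρ0, hρ⟩ := hcont (r / 2) (by linarith)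
      refine ⟨ρ, hρ0, fun x hx => ?_⟩
      by_contra hlt
      push_neg at hlt
      have hxsrc : x ∈ P.source := hball (by
        rw [Metric.mem_ball, hx]
        exact (min_le_left _ _).trans_lt (by linarith))
      have h1 := hρ (x := V x) (by exact hlt)
      rw [(hstrict a).localInverse_apply_image] at h1
      have h2 : (hstrict a).localInverse V _ a (V x) = x := P.left_inv hxsrc
      rw [h2, hx] at h1
      linarith
    set α : ℝ := ρ ^ 2 / 2 with hα
    have hα0 : 0 < α := by positivity
    set β : ℝ := α / 2 with hβ
    have hβ0 : 0 < β := by positivity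
    have hsphereF : ∀ x : X, dist x a = r → α ≤ F y x := by
      intro x hx
      have h1 := hsphere x hx
      have h2 : ρ ^ 2 ≤ ‖V x - y‖ ^ 2 := by
        rw [← dist_eq_norm]
        exact pow_le_pow_left₀ hρ0.le h1 2
      simp only [hFdef, hα]
      nlinarith
    -- the path space
    set PS : Set C(unitInterval, X) := {γ | γ 0 = a ∧ γ 1 = b} with hPSdef
    have hPSclosed : IsClosed PS := by
      have h0 : IsClosed {γ : C(unitInterval, X) | γ 0 = a} :=
        isClosed_singleton.preimage (continuous_eval_const 0)
      have h1 : IsClosed {γ : C(unitInterval, X) | γ 1 = b} :=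
        isClosed_singleton.preimage (continuous_eval_const 1)
      have : PS = {γ : C(unitInterval, X) | γ 0 = a} ∩ {γ : C(unitInterval, X) | γ 1 = b} := rfl
      rw [this]
      exact h0.inter h1
    haveI : CompleteSpace PS := hPSclosed.completeSpace_coe
    set ψ : C(unitInterval, X) → ℝ := fun γ => ⨆ t, F y (γ t) with hψdef
    have hbddψ : ∀ γ : C(unitInterval, X), BddAbove (Set.range fun t => F y (γ t)) :=
      fun γ => (isCompact_range ((hFcont y).comp γ.continuous)).bddAbove
    have hψge : ∀ (γ : C(unitInterval, X)) (t : unitInterval), F y (γ t) ≤ ψ γ :=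
      fun γ t => le_ciSup (hbddψ γ) t
    have hψle : ∀ (γ : C(unitInterval, X)) (c : ℝ), (∀ t, F y (γ t) ≤ c) → ψ γ ≤ c :=
      fun γ c h => ciSup_le h
    have hψ0 : ∀ γ : C(unitInterval, X), 0 ≤ ψ γ := fun γ => (hF0 y (γ 0)).trans (hψge γ 0)
    have hψlsc : LowerSemicontinuous (fun γ : PS => ψ (γ : C(unitInterval, X))) := by
      intro γ c hc
      obtain ⟨t, ht⟩ : ∃ t, c < F y (γ.1 t) := by
        by_contra hcon
        push_neg at hcon
        exact absurd (hψle γ.1 c hcon) (not_le.2 hc)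
      have hcontt : Continuous fun η : PS => F y (η.1 t) :=
        (hFcont y).comp ((continuous_eval_const t).comp continuous_subtype_val)
      have hopen : IsOpen {η : PS | c < F y (η.1 t)} := isOpen_lt continuous_const hcontt
      filter_upwards [hopen.mem_nhds ht] with η hη
      exact hη.trans_le (hψge η.1 t)
    have hivt : ∀ γ : C(unitInterval, X), γ 0 = a → γ 1 = b →
        ∃ t : unitInterval, dist (γ t) a = r := by
      intro γ h0 h1
      have hcd : Continuous fun t : unitInterval => dist (γ t) a :=
        (γ.continuous.dist continuous_const)
      have := intermediate_value_univ (0 : unitInterval) 1 hcd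
      have hrmem : r ∈ Set.Icc (dist (γ 0) a) (dist (γ 1) a) := by
        rw [h0, h1, dist_self]
        exact ⟨hr0.le, by rw [dist_comm]; exact hrab.le⟩
      exact this hrmem
    have hcross : ∀ γ : PS, α ≤ ψ γ.1 := by
      intro γ
      obtain ⟨t, ht⟩ := hivt γ.1 γ.2.1 γ.2.2
      exact (hsphereF _ ht).trans (hψge γ.1 t)
    -- base path
    have hcurve : Continuous fun t : unitInterval => a + (t : ℝ) • (b - a) := by
      exact continuous_const.add ((continuous_subtype_val.smul continuous_const))
    set γ₀ : C(unitInterval, X) := ⟨fun t => a + (t : ℝ) • (b - a), hcurve⟩ with hγ₀def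
    have hγ₀ : γ₀ ∈ PS := by
      constructor
      · show a + ((0 : unitInterval) : ℝ) • (b - a) = a
        simp
      · show a + ((1 : unitInterval) : ℝ) • (b - a) = b
        simp
    set B : ℝ := ψ γ₀ with hB
    -- almost critical points at mountain-pass levels
    have key : ∀ ε : ℝ, 0 < ε → ∃ u : X, β ≤ F y u ∧ F y u ≤ B ∧
        ‖fderiv ℝ (F y) u‖ ≤ 3 * ε := by
      intro ε hε
      obtain ⟨γs, hγB, hγmin⟩ := ekeland hψlsc (fun γ : PS => hψ0 γ.1) hε (⟨γ₀, hγ₀⟩ : PS)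
      set γ : C(unitInterval, X) := (γs : C(unitInterval, X)) with hγdef
      have hγa : γ 0 = a := γs.2.1
      have hγb : γ 1 = b := γs.2.2
      have hψγB : ψ γ ≤ B := hγB
      have hψγα : α ≤ ψ γ := hcross γs
      by_contra hcon
      push_neg at hcon
      have hMnb : ∀ t : unitInterval, β ≤ F y (γ t) → 3 * ε < ‖fderiv ℝ (F y) (γ t)‖ :=
        fun t ht => hcon (γ t) ht ((hψge γ t).trans hψγB)
      set M : Set unitInterval := {t | β ≤ F y (γ t)} with hMdef
      have hMclosed : IsClosed M := isClosed_le continuous_const ((hFcont y).comp γ.continuous)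
      have hMcpt : IsCompact M := hMclosed.isCompact
      have hMne : M.Nonempty := by
        obtain ⟨t, ht⟩ := hivt γ hγa hγb
        refine ⟨t, ?_⟩
        have := hsphereF _ ht
        simp only [hMdef, Set.mem_setOf_eq]
        linarith
      have hM0 : (0 : unitInterval) ∉ M := by
        simp only [hMdef, Set.mem_setOf_eq, hγa, hFa, not_le]
        linarith
      have hM1 : (1 : unitInterval) ∉ M := by
        simp only [hMdef, Set.mem_setOf_eq, hγb, hFb, not_le]
        linarith
      -- descent directions
      have hdir : ∀ t : M, ∃ v : X, ‖v‖ ≤ 1 ∧ ∃ dd > 0, ∀ x : X,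
          dist x (γ t.1) < dd → (fderiv ℝ (F y) x) v < -(2 * ε) := by
        rintro ⟨t, ht⟩
        obtain ⟨v, hv1, hv2⟩ : ∃ v : X, ‖v‖ ≤ 1 ∧ (fderiv ℝ (F y) (γ t)) v < -(3 * ε) := by
          by_contra hcon2
          push_neg at hcon2
          exact absurd (opNorm_le_of_unit_lb (by positivity) hcon2)
            (not_le.2 (hMnb t ht))
        have hcv : Continuous fun x : X => (fderiv ℝ (F y) x) v :=
          (ContinuousLinearMap.apply ℝ ℝ v).continuous.comp (hΦcont y)
        have hca := hcv.continuousAt (x := γ t)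
        rw [Metric.continuousAt_iff] at hca
        obtain ⟨δ, hδ0, hδ⟩ := hca ε hε
        refine ⟨v, hv1, δ, hδ0, fun x hx => ?_⟩
        have h3 := hδ hx
        rw [Real.dist_eq, abs_sub_lt_iff] at h3
        linarith [h3.1]
      choose v hv dd hdd0 hddlt using hdir
      set U : M → Set unitInterval := fun i =>
        {s | dist (γ s) (γ i.1) < dd i / 2} ∩ ({(0 : unitInterval)}ᶜ ∩ {(1 : unitInterval)}ᶜ)
        with hUdef
      have hUopen : ∀ i, IsOpen (U i) := by
        intro i
        refine IsOpen.inter ?_ (isOpen_compl_singleton.inter isOpen_compl_singleton)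
        exact isOpen_lt (γ.continuous.dist continuous_const) continuous_const
      have hU0 : ∀ i, (0 : unitInterval) ∉ U i := fun i hmem => hmem.2.1 rfl
      have hU1 : ∀ i, (1 : unitInterval) ∉ U i := fun i hmem => hmem.2.2 rfl
      have hUcover : M ⊆ ⋃ i : M, U i := by
        intro t ht
        refine Set.mem_iUnion.2 ⟨⟨t, ht⟩, ⟨?_, ?_, ?_⟩⟩
        · show dist (γ t) (γ t) < dd ⟨t, ht⟩ / 2
          rw [dist_self]
          exact half_pos (hdd0 _)
        · intro hmem
          exact hM0 (by rwa [Set.mem_singleton_iff.1 hmem] at ht)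
        · intro hmem
          exact hM1 (by rwa [Set.mem_singleton_iff.1 hmem] at ht)
      obtain ⟨T, hT⟩ := hMcpt.elim_finite_subcover U hUopen hUcover
      have hTne : T.Nonempty := by
        obtain ⟨t, ht⟩ := hMne
        have hmem := hT ht
        rw [Set.mem_iUnion₂] at hmem
        obtain ⟨i, hiT, -⟩ := hmem
        exact ⟨i, hiT⟩
      -- partition of unity
      set φf : M → unitInterval → ℝ := fun i s => Metric.infDist s (U i)ᶜ with hφdef
      have hφcont : ∀ i, Continuous (φf i) := fun i => Metric.continuous_infDist_pt _
      have hφnonneg : ∀ i s, 0 ≤ φf i s := fun i s => Metric.infDist_nonneg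
      have hφzero : ∀ i s, s ∉ U i → φf i s = 0 := fun i s hs => Metric.infDist_zero_of_mem hs
      have hφpos : ∀ i s, s ∈ U i → 0 < φf i s := by
        intro i s hs
        have hcne : ((U i)ᶜ : Set unitInterval).Nonempty := ⟨0, hU0 i⟩
        exact ((hUopen i).isClosed_compl.notMem_iff_infDist_pos hcne).1 (by simpa using hs)
      set den : unitInterval → ℝ := fun s => (∑ i ∈ T, φf i s) + Metric.infDist s M with hdendef
      have hsumnn : ∀ s, 0 ≤ ∑ i ∈ T, φf i s :=
        fun s => Finset.sum_nonneg fun i _ => hφnonneg i s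
      have hdennn : ∀ s, 0 ≤ den s := fun s => add_nonneg (hsumnn s) Metric.infDist_nonneg
      have hdenpos : ∀ s, 0 < den s := by
        intro s
        by_cases hs : s ∈ M
        · have hmem := hT hs
          rw [Set.mem_iUnion₂] at hmem
          obtain ⟨i, hiT, hiU⟩ := hmem
          have h1 : 0 < φf i s := hφpos i s hiU
          have h2 : φf i s ≤ ∑ j ∈ T, φf j s :=
            Finset.single_le_sum (fun j _ => hφnonneg j s) hiT
          have h3 := Metric.infDist_nonneg (x := s) (s := M)
          simp only [hdendef]
          linarith
        · have h1 : 0 < Metric.infDist s M :=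
            (hMclosed.notMem_iff_infDist_pos hMne).1 hs
          have h2 := hsumnn s
          simp only [hdendef]
          linarith
      have hdencont : Continuous den :=
        (continuous_finset_sum T fun i _ => hφcont i).add (Metric.continuous_infDist_pt M)
      set χ : M → unitInterval → ℝ := fun i s => φf i s / den s with hχdef
      have hχcont : ∀ i, Continuous (χ i) :=
        fun i => (hφcont i).div hdencont (fun s => (hdenpos s).ne')
      have hχnonneg : ∀ i s, 0 ≤ χ i s := fun i s => div_nonneg (hφnonneg i s) (hdennn s)
      have hχzero : ∀ i s, s ∉ U i → χ i s = 0 := by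
        intro i s hs
        simp only [hχdef, hφzero i s hs, zero_div]
      have hχsum_le : ∀ s, ∑ i ∈ T, χ i s ≤ 1 := by
        intro s
        simp only [hχdef]
        rw [← Finset.sum_div, div_le_one (hdenpos s)]
        simp only [hdendef]
        linarith [Metric.infDist_nonneg (x := s) (s := M)]
      have hχsum_nonneg : ∀ s, 0 ≤ ∑ i ∈ T, χ i s :=
        fun s => Finset.sum_nonneg fun i _ => hχnonneg i s
      have hχsum_eq : ∀ s ∈ M, ∑ i ∈ T, χ i s = 1 := by
        intro s hs
        have h0 : Metric.infDist s M = 0 := Metric.infDist_zero_of_mem hs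
        simp only [hχdef]
        rw [← Finset.sum_div, div_eq_one_iff_eq (hdenpos s).ne']
        simp [hdendef, h0]
      -- the vector field
      set w : unitInterval → X := fun s => ∑ i ∈ T, χ i s • v i with hwdef
      have hwcont : Continuous w :=
        continuous_finset_sum T fun i _ => (hχcont i).smul continuous_const
      have hwnorm : ∀ s, ‖w s‖ ≤ 1 := by
        intro s
        calc ‖w s‖ ≤ ∑ i ∈ T, ‖χ i s • v i‖ := norm_sum_le _ _
          _ ≤ ∑ i ∈ T, χ i s := by
            refine Finset.sum_le_sum fun i _ => ?_
            rw [norm_smul, Real.norm_eq_abs, abs_of_nonneg (hχnonneg i s)]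
            calc χ i s * ‖v i‖ ≤ χ i s * 1 := mul_le_mul_of_nonneg_left (hv i) (hχnonneg i s)
              _ = χ i s := mul_one _
          _ ≤ 1 := hχsum_le s
      have hw0 : w 0 = 0 := Finset.sum_eq_zero fun i _ => by rw [hχzero i 0 (hU0 i), zero_smul]
      have hw1 : w 1 = 0 := Finset.sum_eq_zero fun i _ => by rw [hχzero i 1 (hU1 i), zero_smul]
      -- step size
      set h0 : ℝ := T.inf' hTne (fun i => dd i / 2) with hh0
      have hh0pos : 0 < h0 := by
        rw [hh0, Finset.lt_inf'_iff]
        exact fun i _ => half_pos (hdd0 i)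
      set h : ℝ := min (α / (4 * ε)) h0 with hhdef
      have hhpos : 0 < h := lt_min (by positivity) hh0pos
      have hhle : ∀ i ∈ T, h ≤ dd i / 2 :=
        fun i hi => (min_le_right _ _).trans (Finset.inf'_le _ hi)
      have hhα : ε * h ≤ α / 4 := by
        have h1 : h ≤ α / (4 * ε) := min_le_left _ _
        calc ε * h ≤ ε * (α / (4 * ε)) := mul_le_mul_of_nonneg_left h1 hε.le
          _ = α / 4 := by field_simp
      -- the deformed path
      set η : C(unitInterval, X) :=
        ⟨fun s => γ s + h • w s, γ.continuous.add (continuous_const.smul hwcont)⟩ with hηdef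
      have hηPS : η ∈ PS := by
        constructor
        · show γ 0 + h • w 0 = a
          rw [hγa, hw0, smul_zero, add_zero]
        · show γ 1 + h • w 1 = b
          rw [hγb, hw1, smul_zero, add_zero]
      have hdistγη : dist γ η ≤ h := by
        rw [ContinuousMap.dist_le hhpos.le]
        intro s
        show dist (γ s) (γ s + h • w s) ≤ h
        rw [dist_eq_norm, sub_add_cancel_left, norm_neg, norm_smul, Real.norm_eq_abs,
          abs_of_pos hhpos]
        calc h * ‖w s‖ ≤ h * 1 := mul_le_mul_of_nonneg_left (hwnorm s) hhpos.le
          _ = h := mul_one h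
      -- key decay estimate
      have hdecay : ∀ s : unitInterval,
          F y (η s) ≤ F y (γ s) - 2 * ε * h * (∑ i ∈ T, χ i s) := by
        intro s
        have hg : ∀ τ : ℝ, HasDerivAt (fun τ : ℝ => F y (γ s + (τ * h) • w s))
            ((fderiv ℝ (F y) (γ s + (τ * h) • w s)) (h • w s)) τ := by
          intro τ
          have h1 : HasDerivAt (fun τ : ℝ => (τ * h) • w s) (h • w s) τ := by
            have := (hasDerivAt_mul_const (x := τ) h).smul_const (w s)
            simpa using this
          have h2 : HasDerivAt (fun τ : ℝ => γ s + (τ * h) • w s) (h • w s) τ := h1.const_add _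
          exact (((hFC y).differentiable one_ne_zero _).hasFDerivAt).comp_hasDerivAt τ h2
        have hcont2 : ContinuousOn (fun τ : ℝ => F y (γ s + (τ * h) • w s)) (Set.Icc 0 1) :=
          (((hFcont y).comp (continuous_const.add
            ((continuous_id.mul continuous_const).smul continuous_const)))).continuousOn
        obtain ⟨ξ, hξmem, hξ⟩ := exists_hasDerivAt_eq_slope
          (fun τ : ℝ => F y (γ s + (τ * h) • w s)) _ one_pos hcont2 (fun τ _ => hg τ)
        have hterm : ∀ i ∈ T,
            χ i s * (fderiv ℝ (F y) (γ s + (ξ * h) • w s)) (v i) ≤ χ i s * (-(2 * ε)) := by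
          intro i hi
          rcases eq_or_lt_of_le (hχnonneg i s) with h0' | h0'
          · rw [← h0']
            simp
          · have hsU : s ∈ U i := by
              by_contra hsU
              rw [hχzero i s hsU] at h0'
              exact lt_irrefl 0 h0'
            have hd1 : dist (γ s) (γ i.1) < dd i / 2 := hsU.1
            have hd2 : dist (γ s + (ξ * h) • w s) (γ s) ≤ h := by
              rw [dist_eq_norm, add_sub_cancel_left, norm_smul, Real.norm_eq_abs,
                abs_of_nonneg (mul_nonneg hξmem.1.le hhpos.le)]
              nlinarith [hwnorm s, hξmem.1.le, hξmem.2.le, hhpos.le,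
                mul_nonneg hξmem.1.le hhpos.le, norm_nonneg (w s)]
            have hd3 : dist (γ s + (ξ * h) • w s) (γ i.1) < dd i := by
              have htr := dist_triangle (γ s + (ξ * h) • w s) (γ s) (γ i.1)
              have := hhle i hi
              linarith
            exact mul_le_mul_of_nonneg_left (le_of_lt (hddlt i _ hd3)) h0'.le
        have hval : (fderiv ℝ (F y) (γ s + (ξ * h) • w s)) (h • w s) =
            h * ∑ i ∈ T, χ i s * (fderiv ℝ (F y) (γ s + (ξ * h) • w s)) (v i) := by
          rw [map_smul, smul_eq_mul]
          congr 1
          rw [hwdef]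
          rw [map_sum]
          exact Finset.sum_congr rfl fun i _ => by rw [map_smul, smul_eq_mul]
        have hsumle : ∑ i ∈ T, χ i s * (fderiv ℝ (F y) (γ s + (ξ * h) • w s)) (v i) ≤
            -(2 * ε) * ∑ i ∈ T, χ i s := by
          calc ∑ i ∈ T, χ i s * (fderiv ℝ (F y) (γ s + (ξ * h) • w s)) (v i)
              ≤ ∑ i ∈ T, χ i s * (-(2 * ε)) := Finset.sum_le_sum hterm
            _ = -(2 * ε) * ∑ i ∈ T, χ i s := by rw [← Finset.sum_mul, mul_comm]
        have hg1 : F y (γ s + ((1 : ℝ) * h) • w s) = F y (η s) := by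
          rw [one_mul]
          rfl
        have hg0 : F y (γ s + ((0 : ℝ) * h) • w s) = F y (γ s) := by
          rw [zero_mul, zero_smul, add_zero]
        rw [hg1, hg0, sub_zero, div_one] at hξ
        have hfin : F y (η s) - F y (γ s) ≤ h * (-(2 * ε) * ∑ i ∈ T, χ i s) := by
          rw [← hξ, hval]
          exact mul_le_mul_of_nonneg_left hsumle hhpos.le
        have harith : h * (-(2 * ε) * ∑ i ∈ T, χ i s) =
            -(2 * ε * h * ∑ i ∈ T, χ i s) := by ring
        linarith [hfin, harith ▸ hfin]
      -- bound the max of F y along η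
      have hψη : ψ η ≤ max (ψ γ - 2 * ε * h) β := by
        refine hψle η _ (fun s => ?_)
        by_cases hs : s ∈ M
        · have h1 := hdecay s
          rw [hχsum_eq s hs, mul_one] at h1
          exact le_max_of_le_left (by linarith [hψge γ s])
        · have h1 := hdecay s
          have h2 : F y (γ s) < β := not_le.1 hs
          have h3 : 0 ≤ 2 * ε * h * ∑ i ∈ T, χ i s := by
            have := hχsum_nonneg s
            positivity
          exact le_max_of_le_right (by linarith)
      -- Ekeland contradiction
      have hEk := hγmin ⟨η, hηPS⟩
      have hdist2 : dist γs (⟨η, hηPS⟩ : PS) ≤ h := by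
        rw [Subtype.dist_eq]
        exact hdistγη
      have h5 : ψ γ - ε * h ≤ ψ η := by
        have h6 : ε * dist γs (⟨η, hηPS⟩ : PS) ≤ ε * h := mul_le_mul_of_nonneg_left hdist2 hε.le
        have h7 : ψ γ - ε * dist γs (⟨η, hηPS⟩ : PS) ≤ ψ η := hEk
        linarith
      rcases le_max_iff.1 hψη with hcase | hcase
      · nlinarith [h5.trans hcase, hε, hhpos]
      · have h8 := h5.trans hcase
        have h9 : α ≤ ψ γ := hψγα
        rw [hβ] at h8
        linarith [hhα]
    -- conclusion via Palais-Smale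
    have hseq : ∀ n : ℕ, ∃ u : X, β ≤ F y u ∧ F y u ≤ B ∧
        ‖fderiv ℝ (F y) u‖ ≤ 1 / (n + 1) := by
      intro n
      obtain ⟨u, h1, h2, h3⟩ := key (1 / (3 * (n + 1))) (by positivity)
      refine ⟨u, h1, h2, h3.trans (le_of_eq ?_)⟩
      field_simp
    choose z hz1 hz2 hz3 using hseq
    obtain ⟨x₀, hVx₀, σ, hσ, hlim⟩ := limit_crit y z B
      (fun k => by rw [abs_of_nonneg (hF0 y _)]; exact hz2 k)
      (squeeze_zero (fun k => norm_nonneg _) hz3 tendsto_one_div_add_atTop_nhds_zero_nat)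
    have h1 : β ≤ F y x₀ := by
      have ht : Tendsto (fun k => F y (z (σ k))) atTop (nhds (F y x₀)) :=
        ((hFcont y).continuousAt.tendsto).comp hlim
      exact ge_of_tendsto ht (Filter.Eventually.of_forall fun k => hz1 (σ k))
    have h2 : F y x₀ = 0 := by simp [hFdef, hVx₀]
    linarith
  refine ⟨⟨hinj, hsurj⟩, hVd, Function.surjInv hsurj, ?_, Function.rightInverse_surjInv hsurj, ?_⟩
  · exact Function.leftInverse_surjInv ⟨hinj, hsurj⟩
  · -- differentiability of inverse
    intro y
    set W := Function.surjInv hsurj with hW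
    set x := W y with hx
    have hVx : V x = y := Function.rightInverse_surjInv hsurj y
    have hloc := (hstrict x).to_localInverse
    have hWeq : W =ᶠ[nhds y] (hstrict x).localInverse V _ x := by
      have h1 : ∀ᶠ z in nhds (V x), V ((hstrict x).localInverse V _ x z) = z :=
        (hstrict x).eventually_right_inverse
      rw [hVx] at h1
      filter_upwards [h1] with z hz
      apply hinj
      rw [hz, Function.rightInverse_surjInv hsurj z]
    have : DifferentiableAt ℝ ((hstrict x).localInverse V _ x) y := by
      have := hloc.differentiableAt
      rwa [hVx] at this
    exact this.congr_of_eventuallyEq hWeq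
end
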